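/- For the DEIM greedy index selection applied to a matrix V ∈ ℝ^{n×r} with linearly independent columns, at each step j the selected index l_j satisfies: the residual r = v_j − V(:,1:j−1) · V(l_{1:j−1},1:j−1)^{-1} · v_j(l_{1:j−1}) is nonzero, hence the j×j matrix V(l_{1:j}, 1:j) is invertible. Consequently, after r steps the full r×r matrix V(l,:) is invertible. -/
import Mathlib


open Matrix

/-- The DEIM residual at step `j`: given a matrix `V` and previously selected
indices `l 0, …, l (j-1)`, the residual of the `j`-th column after interpolatory
projection onto the first `j` columns at those indices:
`r = v_j − V(:,1:j−1) · V(l_{1:j−1},1:j−1)⁻¹ · v_j(l_{1:j−1})`. -/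
noncomputable def deimRes {ι : Type} [Fintype ι] [DecidableEq ι] {r : ℕ}
    (V : Matrix ι (Fin r) ℝ) (l : Fin r → ι) (j : Fin r) (i : ι) : ℝ :=
  V i j -
    Matrix.mulVec (Matrix.of fun (i' : ι) (k : Fin j.1) => V i' (Fin.castLE j.2.le k))
      (Matrix.mulVec
        (Matrix.of fun (k k' : Fin j.1) =>
            V (l (Fin.castLE j.2.le k)) (Fin.castLE j.2.le k'))⁻¹
        (fun k : Fin j.1 => V (l (Fin.castLE j.2.le k)) j)) i

private lemma deim_sum_castLE {m r : ℕ} (h : m ≤ r) (f : Fin r → ℝ)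
    (hf : ∀ k : Fin r, (∀ k' : Fin m, Fin.castLE h k' ≠ k) → f k = 0) :
    ∑ k, f k = ∑ k' : Fin m, f (Fin.castLE h k') := by
  classical
  have hm : ∑ k ∈ Finset.univ.map (Fin.castLEEmb h), f k = ∑ k' : Fin m, f (Fin.castLE h k') := by
    rw [Finset.sum_map]; simp
  rw [← hm]
  refine (Finset.sum_subset (Finset.subset_univ _) ?_).symm
  intro k _ hk
  refine hf k fun k' hk' => hk ?_
  simp only [Finset.mem_map, Finset.mem_univ, true_and]
  exact ⟨k', hk'⟩

section

variable {n r : ℕ} (V : Matrix (Fin n) (Fin r) ℝ) (l : Fin r → Fin n)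

private lemma deimRes_eq (j : Fin r) (i : Fin n) :
    deimRes V l j i = V i j - ∑ k : Fin j.1, V i (Fin.castLE j.2.le k) *
      (Matrix.mulVec
        (Matrix.of fun (k k' : Fin j.1) =>
            V (l (Fin.castLE j.2.le k)) (Fin.castLE j.2.le k'))⁻¹
        (fun k : Fin j.1 => V (l (Fin.castLE j.2.le k)) j)) k := by
  simp [deimRes, Matrix.mulVec, dotProduct]

private lemma deim_mulVec_inj (hV : V.rank = r) : Function.Injective V.mulVec := by
  have hfin : Module.finrank ℝ (LinearMap.ker V.mulVecLin) = 0 := by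
    have h1 := LinearMap.finrank_range_add_finrank_ker V.mulVecLin
    simp only [Module.finrank_pi, Fintype.card_fin] at h1
    have h2 : Module.finrank ℝ ↥(LinearMap.range V.mulVecLin) = r := hV
    omega
  have hker : LinearMap.ker V.mulVecLin = ⊥ := Submodule.finrank_eq_zero.mp hfin
  have := LinearMap.ker_eq_bot.mp hker
  rwa [show ⇑V.mulVecLin = V.mulVec from funext fun v => Matrix.mulVecLin_apply V v] at this

private lemma deim_res_ne (hV : V.rank = r)
    (hl : ∀ (j : Fin r) (i : Fin n), |deimRes V l j i| ≤ |deimRes V l j (l j)|)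
    (j : Fin r) : deimRes V l j (l j) ≠ 0 := by
  have hinj := deim_mulVec_inj V hV
  intro h0
  have hall : ∀ i, deimRes V l j i = 0 := by
    intro i
    have := hl j i
    rw [h0, abs_zero] at this
    exact abs_eq_zero.mp (le_antisymm this (abs_nonneg _))
  set c : Fin j.1 → ℝ := Matrix.mulVec
        (Matrix.of fun (k k' : Fin j.1) =>
            V (l (Fin.castLE j.2.le k)) (Fin.castLE j.2.le k'))⁻¹
        (fun k : Fin j.1 => V (l (Fin.castLE j.2.le k)) j) with hc
  classical
  set x : Fin r → ℝ := fun k => if h : k.1 < j.1 then -c ⟨k.1, h⟩ else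
      if k = j then 1 else 0 with hxdef
  have hx0 : V.mulVec x = 0 := by
    funext i
    have hsum : ∑ k, V i k * x k =
        ∑ k' : Fin (j.1 + 1), V i (Fin.castLE j.2 k') * x (Fin.castLE j.2 k') := by
      refine deim_sum_castLE j.2 _ ?_
      intro k hk
      have h1 : ¬ k.1 < j.1 := by
        intro h
        exact hk ⟨k.1, Nat.lt_succ_of_lt h⟩ (Fin.ext rfl)
      have h2 : k ≠ j := fun h => hk (Fin.last j.1) (by subst h; exact Fin.ext rfl)
      simp only [hxdef, dif_neg h1, if_neg h2, mul_zero]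
    have hlast : ∑ k' : Fin (j.1 + 1), V i (Fin.castLE j.2 k') * x (Fin.castLE j.2 k')
        = (∑ k : Fin j.1, V i (Fin.castLE j.2.le k) * (-c k)) + V i j * 1 := by
      rw [Fin.sum_univ_castSucc]
      congr 1
      · refine Finset.sum_congr rfl fun k _ => ?_
        have e1 : Fin.castLE j.2 k.castSucc = Fin.castLE j.2.le k := Fin.ext rfl
        have e2 : x (Fin.castLE j.2 k.castSucc) = -c k := by
          have hk2 : (Fin.castLE j.2 k.castSucc).1 < j.1 := k.2
          simp only [hxdef, dif_pos hk2]
          rfl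
        rw [e2, e1]
      · have e1 : Fin.castLE j.2 (Fin.last j.1) = j := Fin.ext rfl
        have e2 : x (Fin.castLE j.2 (Fin.last j.1)) = 1 := by
          rw [e1]
          simp [hxdef]
        rw [e2, e1]
    have hres := hall i
    rw [deimRes_eq, ← hc] at hres
    have hmv : V.mulVec x i = ∑ k, V i k * x k := by
      simp [Matrix.mulVec, dotProduct]
    show V.mulVec x i = (0 : ℝ)
    rw [hmv, hsum, hlast]
    simp only [mul_neg, mul_one, Finset.sum_neg_distrib]
    linarith [hres]
  have hx : x = 0 := hinj (by rw [hx0, Matrix.mulVec_zero])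
  have hxj : x j = 1 := by simp [hxdef]
  rw [hx] at hxj
  simp at hxj

-- the step lemma: invertibility of the (m+1)×(m+1) matrix
private lemma deim_step {m : ℕ} (hm : m < r)
    (hA : IsUnit (Matrix.of fun (k k' : Fin m) =>
        V (l (Fin.castLE hm.le k)) (Fin.castLE hm.le k')))
    (hres : deimRes V l ⟨m, hm⟩ (l ⟨m, hm⟩) ≠ 0) :
    IsUnit (Matrix.of fun (k k' : Fin (m + 1)) =>
        V (l (Fin.castLE hm k)) (Fin.castLE hm k')) := by
  classical
  set j : Fin r := ⟨m, hm⟩ with hj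
  set A : Matrix (Fin m) (Fin m) ℝ := Matrix.of fun (k k' : Fin m) =>
      V (l (Fin.castLE hm.le k)) (Fin.castLE hm.le k') with hAdef
  set b : Fin m → ℝ := fun k => V (l (Fin.castLE hm.le k)) j with hb
  set B : Matrix (Fin (m+1)) (Fin (m+1)) ℝ := Matrix.of fun (k k' : Fin (m + 1)) =>
      V (l (Fin.castLE hm k)) (Fin.castLE hm k') with hB
  have hAinj : Function.Injective A.mulVec := Matrix.mulVec_injective_iff_isUnit.mpr hA
  rw [← Matrix.mulVec_injective_iff_isUnit]
  have hker : ∀ x : Fin (m+1) → ℝ, B.mulVec x = 0 → x = 0 := by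
    intro x hx
    set y : Fin m → ℝ := fun k => x k.castSucc with hy
    set t : ℝ := x (Fin.last m) with ht
    -- row equations
    have hrow : ∀ k : Fin (m+1),
        (∑ k' : Fin m, B k k'.castSucc * y k') + B k (Fin.last m) * t = 0 := by
      intro k
      have := congrFun hx k
      rw [show (0 : Fin (m+1) → ℝ) k = 0 from rfl] at this
      rw [← this]
      show _ = B.mulVec x k
      simp only [Matrix.mulVec, dotProduct]
      rw [Fin.sum_univ_castSucc]
    -- first m rows: A.mulVec y = -(t • b)
    have hAy : A.mulVec y = -(t • A.mulVec (A⁻¹.mulVec b)) := by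
      have hAAinv : A * A⁻¹ = 1 :=
        Matrix.mul_nonsing_inv A ((Matrix.isUnit_iff_isUnit_det A).mp hA)
      rw [Matrix.mulVec_mulVec, hAAinv, Matrix.one_mulVec]
      funext k
      have := hrow k.castSucc
      have eB : ∀ k' : Fin m, B k.castSucc k'.castSucc = A k k' := fun k' => rfl
      have eBb : B k.castSucc (Fin.last m) = b k := rfl
      simp only [eB, eBb] at this
      have : A.mulVec y k = -(t * b k) := by
        simp only [Matrix.mulVec, dotProduct]
        have hcomm : ∀ k' : Fin m, A k k' * y k' = A k k' * y k' := fun _ => rfl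
        linarith [this]
      rw [this]
      simp [mul_comm]
    set c : Fin m → ℝ := A⁻¹.mulVec b with hcdef
    have hAy2 : A.mulVec y = A.mulVec (-(t • c)) := by
      rw [hAy, Matrix.mulVec_neg, Matrix.mulVec_smul]
    have hyc : y = -(t • c) := hAinj hAy2
    -- last row
    have hlastrow := hrow (Fin.last m)
    have eB2 : ∀ k' : Fin m, B (Fin.last m) k'.castSucc = V (l j) (Fin.castLE j.2.le k') :=
      fun k' => rfl
    have eB3 : B (Fin.last m) (Fin.last m) = V (l j) j := rfl
    rw [eB3] at hlastrow
    have hres2 : deimRes V l j (l j) =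
        V (l j) j - ∑ k : Fin m, V (l j) (Fin.castLE j.2.le k) * c k := by
      rw [deimRes_eq]
    have ht0 : t = 0 := by
      by_contra htne
      apply hres
      rw [hres2]
      have : ∑ k' : Fin m, B (Fin.last m) k'.castSucc * y k'
          = ∑ k : Fin m, V (l j) (Fin.castLE j.2.le k) * (-(t * c k)) := by
        refine Finset.sum_congr rfl fun k _ => ?_
        rw [eB2 k, hyc]
        simp [smul_eq_mul]
      rw [this] at hlastrow
      simp only [mul_neg, Finset.sum_neg_distrib] at hlastrow
      have hfactor : t * (V (l j) j - ∑ k : Fin m, V (l j) (Fin.castLE j.2.le k) * c k) = 0 := by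
        have : ∑ k : Fin m, V (l j) (Fin.castLE j.2.le k) * (t * c k)
            = t * ∑ k : Fin m, V (l j) (Fin.castLE j.2.le k) * c k := by
          rw [Finset.mul_sum]
          exact Finset.sum_congr rfl fun k _ => by ring
        rw [mul_sub]
        rw [← this]
        linarith [hlastrow]
      rcases mul_eq_zero.mp hfactor with h | h
      · exact absurd h htne
      · exact h
    have hy0 : y = 0 := by
      apply hAinj
      rw [hyc, ht0]
      simp
    funext k
    refine Fin.lastCases ?_ ?_ k
    · rw [← ht, ht0]; rfl
    · intro k0
      have := congrFun hy0 k0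
      rw [hy] at this
      exact this
  intro x1 x2 h12
  have : B.mulVec (x1 - x2) = 0 := by
    rw [Matrix.mulVec_sub, h12, sub_self]
  have := hker _ this
  exact sub_eq_zero.mp this

end

/-- DEIM invertibility lemma: if `V` has full column rank and the indices
`l 0, …, l (r-1)` are selected greedily (each `l j` maximizes the absolute value
of the step-`j` residual), then at each step the residual at the selected index
is nonzero, each leading `(j+1) × (j+1)` submatrix `V(l_{1:j+1},1:j+1)` is
invertible, and consequently the full `r × r` matrix `V(l,:)` is invertible. -/
theorem deim_selected_submatrix_invertible
    {n r : ℕ} (V : Matrix (Fin n) (Fin r) ℝ)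
    (hV : V.rank = r)
    (l : Fin r → Fin n)
    (hl : ∀ (j : Fin r) (i : Fin n), |deimRes V l j i| ≤ |deimRes V l j (l j)|) :
    (∀ j : Fin r, deimRes V l j (l j) ≠ 0) ∧
    (∀ j : Fin r, IsUnit (Matrix.of fun (k k' : Fin (j.1 + 1)) =>
        V (l (Fin.castLE j.2 k)) (Fin.castLE j.2 k'))) ∧
    IsUnit (V.submatrix l id) := by
  have main : ∀ m (hm : m ≤ r), IsUnit (Matrix.of fun (k k' : Fin m) =>
      V (l (Fin.castLE hm k)) (Fin.castLE hm k')) := by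
    intro m
    induction m with
    | zero =>
      intro hm
      rw [Matrix.isUnit_iff_isUnit_det, Matrix.det_fin_zero]
      exact isUnit_one
    | succ m ih =>
      intro hm1
      have hm : m < r := hm1
      exact deim_step V l hm (ih hm.le) (deim_res_ne V l hV hl ⟨m, hm⟩)
  refine ⟨fun j => deim_res_ne V l hV hl j, fun j => main (j.1 + 1) j.2, ?_⟩
  exact main r le_rfl
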